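/- arXiv:dg-ga/9603008 — 2 statements merged into one kernel-verified Lean document; each statement's English description precedes it below -/
import Mathlib

section
/- Let 0 < λ₁ ≤ λ₂ ≤ λ₃ ≤ λ₄ < 1/√2 with λ₁² + λ₂² + λ₃² + λ₄² < 1 + 2λ₁², and let α₁ be a real number with 0 < α₁ ≤ λ₁. Define α_q for q = 2,3,4 by α_q² = (1/2)·[1 - ((1 - 2λ_q²)/(1 - 2λ₁²))·(1 - 2α₁²)]. Then 0 < α_q² ≤ λ_q² for q = 2,3,4, and the numbers x := (1 - 2λ₁²)/(1 - 2α₁²) and y := (1 - x)/2 satisfy x > 0, y ≥ 0, x + 2y = 1, and α_q² x + y = λ_q² for all q = 1,2,3,4. -/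
lemma stmt_3_key (l1 a1 l : ℝ) (h1 : 0 < l1) (ha0 : 0 < a1) (ha1 : a1 ≤ l1)
    (hl : l1 ≤ l) (hlsq : l^2 < 1/2) :
    (0 < (1/2) * (1 - (1 - 2*l^2)/(1 - 2*l1^2) * (1 - 2*a1^2)) ∧
     (1/2) * (1 - (1 - 2*l^2)/(1 - 2*l1^2) * (1 - 2*a1^2)) ≤ l^2) ∧
    (1/2) * (1 - (1 - 2*l^2)/(1 - 2*l1^2) * (1 - 2*a1^2)) * ((1 - 2*l1^2)/(1 - 2*a1^2))
      + (1 - (1 - 2*l1^2)/(1 - 2*a1^2))/2 = l^2 := by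
  have hlsq' : l1^2 ≤ l^2 := pow_le_pow_left₀ h1.le hl 2
  have hasq : a1^2 ≤ l1^2 := pow_le_pow_left₀ ha0.le ha1 2
  have ha2 : 0 < a1^2 := pow_pos ha0 2
  have hd1 : 0 < 1 - 2*l1^2 := by linarith
  have hda : 0 < 1 - 2*a1^2 := by linarith
  have hda1 : 1 - 2*a1^2 < 1 := by linarith
  have hr : (1 - 2*l^2)/(1 - 2*l1^2) * (1 - 2*l1^2) = 1 - 2*l^2 :=
    div_mul_cancel₀ _ (ne_of_gt hd1)
  have hxeq : (1 - 2*l1^2)/(1 - 2*a1^2) * (1 - 2*a1^2) = 1 - 2*l1^2 :=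
    div_mul_cancel₀ _ (ne_of_gt hda)
  have hrle : (1 - 2*l^2)/(1 - 2*l1^2) ≤ 1 := by rw [div_le_one hd1]; linarith
  have hr0 : 0 ≤ (1 - 2*l^2)/(1 - 2*l1^2) := div_nonneg (by linarith) hd1.le
  refine ⟨⟨by nlinarith, by nlinarith⟩, by nlinarith⟩

theorem stmt_3 (l1 l2 l3 l4 a1 : ℝ)
    (h1 : 0 < l1) (h12 : l1 ≤ l2) (h23 : l2 ≤ l3) (h34 : l3 ≤ l4)
    (h4 : l4 < 1 / Real.sqrt 2)
    (hsum : l1^2 + l2^2 + l3^2 + l4^2 < 1 + 2*l1^2)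
    (ha0 : 0 < a1) (ha1 : a1 ≤ l1) :
    let A : Fin 4 → ℝ := ![a1^2,
      (1/2) * (1 - (1 - 2*l2^2)/(1 - 2*l1^2) * (1 - 2*a1^2)),
      (1/2) * (1 - (1 - 2*l3^2)/(1 - 2*l1^2) * (1 - 2*a1^2)),
      (1/2) * (1 - (1 - 2*l4^2)/(1 - 2*l1^2) * (1 - 2*a1^2))]
    let L : Fin 4 → ℝ := ![l1^2, l2^2, l3^2, l4^2]
    let x := (1 - 2*l1^2)/(1 - 2*a1^2)
    let y := (1 - x)/2
    (∀ q, 0 < A q ∧ A q ≤ L q) ∧ 0 < x ∧ 0 ≤ y ∧ x + 2*y = 1 ∧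
    ∀ q, A q * x + y = L q := by
  have hs2 : Real.sqrt 2 * Real.sqrt 2 = 2 := Real.mul_self_sqrt (by norm_num)
  have hs2pos : (0:ℝ) < Real.sqrt 2 := Real.sqrt_pos.2 (by norm_num)
  have h4pos : 0 < l4 := lt_of_lt_of_le h1 (h12.trans (h23.trans h34))
  have h4' : l4 * Real.sqrt 2 < 1 := (lt_div_iff₀ hs2pos).mp h4
  have h4sq : l4^2 < 1/2 := by nlinarith
  have h3sq : l3^2 < 1/2 := by nlinarith
  have h2sq : l2^2 < 1/2 := by nlinarith
  have h1sq : l1^2 < 1/2 := by nlinarith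
  have hasq : a1^2 ≤ l1^2 := pow_le_pow_left₀ ha0.le ha1 2
  have ha2 : 0 < a1^2 := pow_pos ha0 2
  have hd1 : 0 < 1 - 2*l1^2 := by linarith
  have hda : 0 < 1 - 2*a1^2 := by linarith
  have hx0 : 0 < (1 - 2*l1^2)/(1 - 2*a1^2) := div_pos hd1 hda
  have hx1 : (1 - 2*l1^2)/(1 - 2*a1^2) ≤ 1 := by rw [div_le_one hda]; linarith
  have hxeq : (1 - 2*l1^2)/(1 - 2*a1^2) * (1 - 2*a1^2) = 1 - 2*l1^2 :=
    div_mul_cancel₀ _ (ne_of_gt hda)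
  intro A L x y
  have hxx : x = (1 - 2*l1^2)/(1 - 2*a1^2) := rfl
  have hyy : y = (1 - x)/2 := rfl
  refine ⟨?_, hx0, by rw [hyy]; linarith, by rw [hyy]; ring, ?_⟩
  · intro q
    fin_cases q <;>
      simp only [A, L, Fin.zero_eta, Fin.mk_one, Fin.reduceFinMk, Fin.isValue,
        Matrix.cons_val_zero, Matrix.cons_val_one, Matrix.head_cons,
        Matrix.cons_val_two, Matrix.tail_cons, Matrix.cons_val_three]
    · exact ⟨ha2, hasq⟩
    · exact (stmt_3_key l1 a1 l2 h1 ha0 ha1 h12 h2sq).1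
    · exact (stmt_3_key l1 a1 l3 h1 ha0 ha1 (h12.trans h23) h3sq).1
    · exact (stmt_3_key l1 a1 l4 h1 ha0 ha1 (h12.trans (h23.trans h34)) h4sq).1
  · intro q
    fin_cases q <;>
      simp only [A, L, hxx, hyy, Fin.zero_eta, Fin.mk_one, Fin.reduceFinMk, Fin.isValue,
        Matrix.cons_val_zero, Matrix.cons_val_one, Matrix.head_cons,
        Matrix.cons_val_two, Matrix.tail_cons, Matrix.cons_val_three]
    · nlinarith [hxeq]
    · exact (stmt_3_key l1 a1 l2 h1 ha0 ha1 h12 h2sq).2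
    · exact (stmt_3_key l1 a1 l3 h1 ha0 ha1 (h12.trans h23) h3sq).2
    · exact (stmt_3_key l1 a1 l4 h1 ha0 ha1 (h12.trans (h23.trans h34)) h4sq).2
end

section
/- Let 0 < λ₁ ≤ ⋯ ≤ λ₅ with Σ_{q=1}^5 λ_q² ≥ 4λ₅² and Σ_{q=1}^5 λ_q² < 2, and let 0 < αᵢ ≤ λᵢ. If Σ_{q=1}^5 λ_q² - 4λ₅² ≥ Σ_{q=1}^5 α_q² - 4α₁² and α₁ ≤ ⋯ ≤ α₅, then for x := (2 - Σλ_q²)/(2 - Σα_q²) and every i = 1,…,5: Σ_{q=1}^5 λ_q² - 4λᵢ² ≥ x·(Σ_{q=1}^5 α_q² - 4αᵢ²). -/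
theorem stmt_6 (lam a : Fin 5 → ℝ)
    (hl0 : 0 < lam 0) (hlmono : ∀ i j : Fin 5, i ≤ j → lam i ≤ lam j)
    (hbig : 4 * (lam 4)^2 ≤ ∑ q, (lam q)^2)
    (hlt : ∑ q, (lam q)^2 < 2)
    (ha0 : ∀ q, 0 < a q) (hale : ∀ q, a q ≤ lam q)
    (hamono : ∀ i j : Fin 5, i ≤ j → a i ≤ a j)
    (hcontrol : ∑ q, (a q)^2 - 4*(a 0)^2 ≤ ∑ q, (lam q)^2 - 4*(lam 4)^2) :
    ∀ i : Fin 5,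
      ((2 - ∑ q, (lam q)^2) / (2 - ∑ q, (a q)^2)) * (∑ q, (a q)^2 - 4*(a i)^2)
        ≤ ∑ q, (lam q)^2 - 4*(lam i)^2 := by
  intro i
  have hAS : ∑ q, (a q)^2 ≤ ∑ q, (lam q)^2 :=
    Finset.sum_le_sum fun q _ => pow_le_pow_left₀ (ha0 q).le (hale q) 2
  have hA2 : 0 < 2 - ∑ q, (a q)^2 := by linarith
  have hx1 : (2 - ∑ q, (lam q)^2) / (2 - ∑ q, (a q)^2) ≤ 1 := by
    rw [div_le_one hA2]; linarith
  have hx0 : 0 ≤ (2 - ∑ q, (lam q)^2) / (2 - ∑ q, (a q)^2) :=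
    div_nonneg (by linarith) hA2.le
  have hai : a 0 ≤ a i := hamono 0 i (by omega)
  have hli : lam i ≤ lam 4 := hlmono i 4 (by omega)
  have hli0 : 0 < lam i := lt_of_lt_of_le hl0 (hlmono 0 i (by omega))
  have key : ∑ q, (a q)^2 - 4*(a i)^2 ≤ ∑ q, (lam q)^2 - 4*(lam i)^2 := by
    nlinarith [(ha0 0).le, hli0.le]
  rcases le_or_gt 0 (∑ q, (a q)^2 - 4*(a i)^2) with h | h
  · calc ((2 - ∑ q, (lam q)^2) / (2 - ∑ q, (a q)^2)) * (∑ q, (a q)^2 - 4*(a i)^2)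
        ≤ 1 * (∑ q, (a q)^2 - 4*(a i)^2) := mul_le_mul_of_nonneg_right hx1 h
      _ ≤ ∑ q, (lam q)^2 - 4*(lam i)^2 := by linarith
  · have h1 : ((2 - ∑ q, (lam q)^2) / (2 - ∑ q, (a q)^2)) * (∑ q, (a q)^2 - 4*(a i)^2) ≤ 0 :=
      mul_nonpos_of_nonneg_of_nonpos hx0 h.le
    nlinarith [hli0.le]
end
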